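/- Let y be a canonical word over Fin n, let k be a letter, and let x = filter≥k y be the word obtained from y by deleting all letters strictly less than k. Then every infix of x of the form [i] ++ u ++ [i] is either special or satisfies that every letter occurring in u is ≥ i. -/

import Mathlib

variable {n : ℕ}

/-- Generating relation of the Kiselman congruence on words over `Fin n`. -/
inductive KisStep : List (Fin n) → List (Fin n) → Prop
  | idem : ∀ (u v : List (Fin n)) (i : Fin n),
      KisStep (u ++ [i, i] ++ v) (u ++ [i] ++ v)
  | left : ∀ (u v : List (Fin n)) (i j : Fin n), i < j →
      KisStep (u ++ [i, j, i] ++ v) (u ++ [i, j] ++ v)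
  | right : ∀ (u v : List (Fin n)) (i j : Fin n), i < j →
      KisStep (u ++ [j, i, j] ++ v) (u ++ [i, j] ++ v)

/-- The Kiselman congruence: smallest equivalence relation containing `KisStep`. -/
def KisEquiv (x y : List (Fin n)) : Prop := Relation.EqvGen KisStep x y

/-- An infix `[i] ++ u ++ [i]` is special if `u` contains a letter `> i` and a letter `< i`. -/
def Special (i : Fin n) (u : List (Fin n)) : Prop :=
  (∃ j ∈ u, i < j) ∧ (∃ j ∈ u, j < i)

/-- A word is canonical if all its infixes of the form `[i] ++ u ++ [i]` are special. -/
def Canonical (w : List (Fin n)) : Prop :=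
  ∀ (i : Fin n) (u : List (Fin n)), ([i] ++ u ++ [i]) <:+: w → Special i u

/-- Delete all letters strictly smaller than `k`. -/
def filterGE (k : Fin n) (w : List (Fin n)) : List (Fin n) :=
  w.filter (fun a => decide (k ≤ a))

/-- `trunc i w` is the longest suffix of `w` with head `i`, or `[]` if `i ∉ w`. -/
def trunc (i : Fin n) : List (Fin n) → List (Fin n)
  | [] => []
  | a :: t => if a = i then a :: t else trunc i t

/-- Longest suffix of `w` whose head is `< k` (as a natural number), or `[]`. -/
def truncLtN (k : ℕ) : List (Fin n) → List (Fin n)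
  | [] => []
  | a :: t => if (a : ℕ) < k then a :: t else truncLtN k t

/-- `join u v = u⁺ ++ v`, where `u⁻` is the longest suffix of `u` that is a sublist of `v`. -/
def join : List (Fin n) → List (Fin n) → List (Fin n)
  | [], v => v
  | a :: t, v => if (a :: t).Sublist v then v else a :: join t v

/-- The local update function at vertex `i` of the update system `S_n^⋆`. -/
def Fstep (i : Fin n) (s : Fin n → List (Fin n)) : Fin n → List (Fin n) :=
  Function.update s i
    (i :: List.foldr join []
      ((((List.finRange n).filter (fun j => decide (i < j))).reverse).map s))

/-- The evolution induced by a word (rightmost letter acts first). -/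
def Fword (w : List (Fin n)) (s : Fin n → List (Fin n)) : Fin n → List (Fin n) :=
  w.foldr Fstep s

/-- The initial system state `⋆`. -/
def starState : Fin n → List (Fin n) := fun _ => []

lemma filter_decomp {α} (p : α → Bool) : ∀ (w s t : List α), w.filter p = s ++ t →
    ∃ s' t', w = s' ++ t' ∧ s'.filter p = s ∧ t'.filter p = t := by
  intro w
  induction w with
  | nil =>
    intro s t h
    simp only [List.filter_nil] at h
    obtain ⟨h1, h2⟩ := List.append_eq_nil_iff.mp h.symm
    exact ⟨[], [], rfl, by simp [h1], by simp [h2]⟩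
  | cons a w ih =>
    intro s t h
    by_cases hp : p a
    · rw [List.filter_cons_of_pos hp] at h
      cases s with
      | nil =>
        exact ⟨[], a :: w, rfl, rfl, by simpa [List.filter_cons_of_pos hp] using h⟩
      | cons b s =>
        simp only [List.cons_append, List.cons_eq_cons] at h
        obtain ⟨rfl, hrest⟩ := h
        obtain ⟨s', t', rfl, h1, h2⟩ := ih s t hrest
        exact ⟨a :: s', t', rfl, by simp [List.filter_cons_of_pos hp, h1], h2⟩
    · rw [List.filter_cons_of_neg hp] at h
      obtain ⟨s', t', rfl, h1, h2⟩ := ih s t h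
      exact ⟨a :: s', t', rfl, by simp [List.filter_cons_of_neg hp, h1], h2⟩

lemma filter_eq_cons_decomp {α} (p : α → Bool) : ∀ (w : List α) (a : α) (rest : List α),
    w.filter p = a :: rest →
    ∃ l1 l2, w = l1 ++ a :: l2 ∧ l1.filter p = [] ∧ p a = true ∧ l2.filter p = rest := by
  intro w
  induction w with
  | nil => intro a rest h; simp at h
  | cons b w ih =>
    intro a rest h
    by_cases hp : p b
    · rw [List.filter_cons_of_pos hp] at h
      obtain ⟨rfl, rfl⟩ := List.cons_eq_cons.mp h
      exact ⟨[], w, rfl, rfl, hp, rfl⟩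
    · rw [List.filter_cons_of_neg hp] at h
      obtain ⟨l1, l2, rfl, h1, h2, h3⟩ := ih a rest h
      exact ⟨b :: l1, l2, rfl, by simp [List.filter_cons_of_neg hp, h1], h2, h3⟩

/-- If `y` is canonical and `x = filterGE k y`, then every infix of `x` of the form
`[i] ++ u ++ [i]` is either special or has all letters of `u` at least `i`. -/
theorem stmt_6 {n : ℕ} (hn : 1 ≤ n) (y : List (Fin n)) (hy : Canonical y) (k : Fin n)
    (i : Fin n) (u : List (Fin n)) (hinf : ([i] ++ u ++ [i]) <:+: filterGE k y) :
    Special i u ∨ ∀ a ∈ u, i ≤ a := by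
  by_cases hlt : ∃ a ∈ u, a < i
  · left
    refine ⟨?_, hlt⟩
    set p : Fin n → Bool := fun a => decide (k ≤ a) with hp
    obtain ⟨s, t, hst⟩ := hinf
    have h1 : y.filter p = s ++ ([i] ++ u ++ [i] ++ t) := by
      rw [hp, show (y.filter fun a => decide (k ≤ a)) = filterGE k y from rfl, ← hst]
      simp
    obtain ⟨s', w1, hy1, hs', hw1⟩ := filter_decomp p y s _ h1
    have hw1' : w1.filter p = i :: (u ++ [i] ++ t) := by simpa using hw1
    obtain ⟨l1, l2, hy2, hl1, hpi, hl2⟩ := filter_eq_cons_decomp p w1 i _ hw1'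
    obtain ⟨u', w2, hy3, hu', hw2⟩ := filter_decomp p l2 u ([i] ++ t) (by simpa using hl2)
    have hw2' : w2.filter p = i :: t := by simpa using hw2
    obtain ⟨m1, m2, hy4, hm1, _, hm2⟩ := filter_eq_cons_decomp p w2 i _ hw2'
    have hinfy : ([i] ++ (u' ++ m1) ++ [i]) <:+: y :=
      ⟨s' ++ l1, m2, by rw [hy1, hy2, hy3, hy4]; simp⟩
    obtain ⟨⟨j, hj, hij⟩, _⟩ := hy i (u' ++ m1) hinfy
    have hki : k ≤ i := by simpa [hp] using hpi
    have hpj : p j = true := by simp [hp]; exact hki.trans hij.le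
    rcases List.mem_append.mp hj with hj1 | hj2
    · refine ⟨j, ?_, hij⟩
      rw [← hu']
      exact List.mem_filter.mpr ⟨hj1, hpj⟩
    · exfalso
      have : j ∈ m1.filter p := List.mem_filter.mpr ⟨hj2, hpj⟩
      rw [hm1] at this
      exact absurd this List.not_mem_nil
  · right
    intro a ha
    exact not_lt.mp fun h => hlt ⟨a, ha, h⟩
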